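/- Let T ∈ {1,…,n} and Z = (Z₁,…,Zₙ) be jointly distributed with E[Zᵢ] = 0 and ‖Zᵢ‖_p ≤ σ for all i, where p ≥ 1 and 1/p + 1/q = 1. Then |E[Z_T]| ≤ σ · n^{1/p} · (Σᵢ inf_{aᵢ∈ℝ} E|P_{T|Z}(i|Z) − aᵢ|^q)^{1/q}. -/

import Mathlib

open MeasureTheory Set ENNReal

private lemma iInf_comp_sum_aux {ι α : Type*} [DecidableEq ι] [Nonempty α] (s : Finset ι)
    (G : ι → α → ℝ≥0∞) :
    (⨅ c : ι → α, ∑ i ∈ s, G i (c i)) = ∑ i ∈ s, ⨅ a, G i a := by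
  classical
  induction s using Finset.induction_on with
  | empty => simp
  | @insert j s hj ih =>
    rw [Finset.sum_insert hj, ← ih, ENNReal.iInf_add]
    simp_rw [ENNReal.add_iInf]
    apply le_antisymm
    · refine le_iInf fun a => le_iInf fun c => ?_
      refine iInf_le_of_le (Function.update c j a) ?_
      rw [Finset.sum_insert hj, Function.update_self]
      refine add_le_add le_rfl (le_of_eq (Finset.sum_congr rfl fun i hi => ?_))
      rw [Function.update_of_ne (ne_of_mem_of_not_mem hi hj)]
    · refine le_iInf fun c => ?_
      rw [Finset.sum_insert hj]
      exact iInf₂_le_of_le (c j) c le_rfl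

private lemma iInf_rpow_aux {ι : Type*} [Nonempty ι] (f : ι → ℝ≥0∞) {r : ℝ} (hr : 0 < r) :
    (⨅ i, f i) ^ r = ⨅ i, (f i) ^ r := by
  have h := OrderIso.map_iInf (ENNReal.orderIsoRpow r hr) f
  simp only [ENNReal.orderIsoRpow_apply] at h
  exact h

private def cmZ {Ω : Type*} {n : ℕ} (Z : Fin n → Ω → ℝ) : MeasurableSpace Ω :=
  MeasurableSpace.comap (fun ω' => fun j => Z j ω') MeasurableSpace.pi

/-- Main theorem, `p`-norm form (bound via the conditional distribution of `T` given
`Z`): if `E[Zᵢ] = 0` and `‖Zᵢ‖_p ≤ σ`, `p ≥ 1`, `1/p + 1/q = 1`, then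
`|E[Z_T]| ≤ σ n^{1/p} (Σᵢ inf_{aᵢ} E|P_{T|Z}(i|Z) - aᵢ|^q)^{1/q}`,
where for `p = 1` we take `q = ∞` with the `L^∞` norm (so that the bound reads
`σ · n · maxᵢ inf_{aᵢ} ‖P_{T|Z}(i|Z) - aᵢ‖_∞`). -/
theorem stmt11 {Ω : Type*} [MeasurableSpace Ω] (μ : Measure Ω) [IsProbabilityMeasure μ]
    (n : ℕ) (Z : Fin n → Ω → ℝ) (T : Ω → Fin n) (hT : Measurable T)
    (hZm : ∀ i, Measurable (Z i)) (hZint : ∀ i, Integrable (Z i) μ)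
    (hmean : ∀ i, ∫ ω, Z i ω ∂μ = 0)
    (p : ℝ) (hp : 1 ≤ p) (σ : ℝ) (hσ : 0 < σ)
    (hnorm : ∀ i, eLpNorm (Z i) (ENNReal.ofReal p) μ ≤ ENNReal.ofReal σ) :
    -- the conditional probability `P(T = i | Z)` as a random variable
    ∀ W : Fin n → Ω → ℝ,
      (∀ i, W i = μ[(fun ω' => if T ω' = i then (1:ℝ) else 0) |
        MeasurableSpace.comap (fun ω' => fun j => Z j ω') MeasurableSpace.pi]) →
      -- case `1 < p` with conjugate exponent `q` finite
      (∀ q : ℝ, 1 < p → 1 / p + 1 / q = 1 →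
        ENNReal.ofReal |∫ ω, Z (T ω) ω ∂μ| ≤
          ENNReal.ofReal σ * (n : ℝ≥0∞) ^ (1 / p) *
            (∑ i : Fin n, ⨅ a : ℝ,
              ∫⁻ ω, ENNReal.ofReal |W i ω - a| ^ q ∂μ) ^ (1 / q)) ∧
      -- case `p = 1`, `q = ∞` with the `L^∞` norm
      (p = 1 →
        ENNReal.ofReal |∫ ω, Z (T ω) ω ∂μ| ≤
          ENNReal.ofReal σ * (n : ℝ≥0∞) *
            ⨆ i : Fin n, ⨅ a : ℝ, eLpNorm (fun ω => W i ω - a) ∞ μ) := by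
  intro W hW
  rename_i mΩ hPμ
  set F : Fin n → Ω → ℝ := fun i ω => if T ω = i then (1:ℝ) else 0 with hF_def
  have hW' : ∀ i, W i = μ[F i | cmZ Z] := hW
  have hvec : Measurable (fun ω' => fun j => Z j ω') := measurable_pi_lambda _ hZm
  have hm : cmZ Z ≤ mΩ := hvec.comap_le
  haveI : SigmaFinite (μ.trim hm) := by infer_instance
  -- basic facts about F
  have hFint : ∀ i, Integrable (F i) μ := by
    intro i
    have hFeq : F i = (T ⁻¹' {i}).indicator (fun _ => (1:ℝ)) := by
      ext ω; by_cases h : T ω = i <;> simp [hF_def, Set.indicator_apply, h]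
    rw [hFeq]
    exact (integrable_const (1:ℝ)).indicator (hT (measurableSet_singleton i))
  -- Z i is m-strongly measurable
  have hZim : ∀ i, StronglyMeasurable[cmZ Z] (Z i) := by
    intro i
    have h1 : @Measurable Ω (Fin n → ℝ) (cmZ Z) MeasurableSpace.pi
        (fun ω' => fun j => Z j ω') := fun s hs => ⟨s, hs, rfl⟩
    exact ((measurable_pi_apply i).comp h1).stronglyMeasurable
  -- W i is strongly measurable and a.e. bounded by 1
  have hWsm : ∀ i, StronglyMeasurable (W i) := by
    intro i; rw [hW' i]; exact stronglyMeasurable_condExp.mono hm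
  have hW01 : ∀ i, ∀ᵐ ω ∂μ, |W i ω| ≤ 1 := by
    intro i
    have h0 : (0 : Ω → ℝ) ≤ᵐ[μ] μ[F i | cmZ Z] :=
      condExp_nonneg (Filter.Eventually.of_forall fun ω => by
        by_cases h : T ω = i <;> simp [hF_def, h])
    have h1 : μ[F i | cmZ Z] ≤ᵐ[μ] μ[(fun _ => (1:ℝ)) | cmZ Z] :=
      condExp_mono (hFint i) (integrable_const 1)
        (Filter.Eventually.of_forall fun ω => by
          by_cases h : T ω = i <;> simp [hF_def, h])
    rw [condExp_const hm (1:ℝ)] at h1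
    rw [hW' i]
    filter_upwards [h0, h1] with ω hω0 hω1
    rw [abs_le]
    refine ⟨le_trans (by norm_num : (-1:ℝ) ≤ 0) ?_, hω1⟩
    exact hω0
  -- integrability of Z i * F i
  have hint1 : ∀ i, Integrable (fun ω => Z i ω * F i ω) μ := by
    intro i
    have heq : (fun ω => Z i ω * F i ω) = (T ⁻¹' {i}).indicator (Z i) := by
      ext ω; by_cases h : T ω = i <;> simp [hF_def, Set.indicator_apply, h]
    rw [heq]
    exact (hZint i).indicator (hT (measurableSet_singleton i))
  -- key per-index Hölder bound
  have key : ∀ (Q : ℝ≥0∞), (1:ℝ≥0∞) / 1 = 1 / ENNReal.ofReal p + 1 / Q →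
      ∀ i (a : ℝ),
      ENNReal.ofReal |∫ ω, Z i ω * F i ω ∂μ| ≤
        ENNReal.ofReal σ * eLpNorm (fun ω => W i ω - a) Q μ := by
    intro Q hQ i a
    have hWa_sm : AEStronglyMeasurable (fun ω => W i ω - a) μ := by
      exact (((hWsm i).sub (stronglyMeasurable_const :
        StronglyMeasurable fun _ : Ω => a))).aestronglyMeasurable
    have hWa_bd : ∀ᵐ ω ∂μ, ‖W i ω - a‖ ≤ 1 + |a| := by
      filter_upwards [hW01 i] with ω hω
      calc ‖W i ω - a‖ = |W i ω - a| := rfl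
        _ ≤ |W i ω| + |a| := abs_sub _ _
        _ ≤ 1 + |a| := by linarith
    have hint3 : Integrable (fun ω => Z i ω * (W i ω - a)) μ := by
      have h := (hZint i).bdd_mul (f := fun ω => W i ω - a) hWa_sm hWa_bd
      exact h.congr (Filter.Eventually.of_forall fun ω => mul_comm _ _)
    have hint2 : Integrable (fun ω => Z i ω * W i ω) μ := by
      have hb : ∀ᵐ ω ∂μ, ‖W i ω‖ ≤ 1 := by
        filter_upwards [hW01 i] with ω hω; simpa using hω
      have h := (hZint i).bdd_mul (f := W i) (hWsm i).aestronglyMeasurable hb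
      exact h.congr (Filter.Eventually.of_forall fun ω => mul_comm _ _)
    -- pull-out property
    have hpull : μ[(fun ω => Z i ω * F i ω) | cmZ Z] =ᵐ[μ] fun ω => Z i ω * W i ω := by
      have h := condExp_mul_of_stronglyMeasurable_left (hZim i) (hint1 i) (hFint i)
      rw [hW' i]
      exact h
    have hA0 : ∫ ω, (μ[(fun ω' => Z i ω' * F i ω') | cmZ Z]) ω ∂μ =
        ∫ ω, Z i ω * F i ω ∂μ := integral_condExp hm
    have hA : ∫ ω, Z i ω * F i ω ∂μ = ∫ ω, Z i ω * W i ω ∂μ :=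
      calc ∫ ω, Z i ω * F i ω ∂μ
          = ∫ ω, (μ[(fun ω' => Z i ω' * F i ω') | cmZ Z]) ω ∂μ := hA0.symm
        _ = ∫ ω, Z i ω * W i ω ∂μ := integral_congr_ae hpull
    have hB : ∫ ω, Z i ω * (W i ω - a) ∂μ = ∫ ω, Z i ω * W i ω ∂μ := by
      have hfe : (fun ω => Z i ω * (W i ω - a)) = fun ω => Z i ω * W i ω - a * Z i ω := by
        ext ω; ring
      rw [hfe, integral_sub hint2 ((hZint i).const_mul a), integral_const_mul, hmean i,
        mul_zero, sub_zero]
    calc ENNReal.ofReal |∫ ω, Z i ω * F i ω ∂μ|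
        = ENNReal.ofReal |∫ ω, Z i ω * (W i ω - a) ∂μ| := by rw [hA, ← hB]
      _ ≤ ENNReal.ofReal (∫ ω, ‖Z i ω * (W i ω - a)‖ ∂μ) := by
          apply ENNReal.ofReal_le_ofReal
          rw [← Real.norm_eq_abs]
          exact norm_integral_le_integral_norm _
      _ = ∫⁻ ω, ‖Z i ω * (W i ω - a)‖ₑ ∂μ := ofReal_integral_norm_eq_lintegral_enorm hint3
      _ = eLpNorm (fun ω => Z i ω * (W i ω - a)) 1 μ := eLpNorm_one_eq_lintegral_enorm.symm
      _ ≤ eLpNorm (Z i) (ENNReal.ofReal p) μ * eLpNorm (fun ω => W i ω - a) Q μ := by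
          haveI hH : (ENNReal.ofReal p).HolderTriple Q 1 := ⟨by simpa [one_div] using hQ.symm⟩
          have h := eLpNorm_le_eLpNorm_mul_eLpNorm'_of_norm (p := ENNReal.ofReal p) (q := Q) (r := 1)
            (hZm i).aestronglyMeasurable hWa_sm (fun x y => x * y) 1
            (Filter.Eventually.of_forall fun ω => by rw [NNReal.coe_one, one_mul]; exact norm_mul_le _ _)
          rw [ENNReal.coe_one, one_mul] at h
          exact h
      _ ≤ ENNReal.ofReal σ * eLpNorm (fun ω => W i ω - a) Q μ :=
          mul_le_mul_left (hnorm i) _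
  -- decomposition of the integral
  have hdec : ENNReal.ofReal |∫ ω, Z (T ω) ω ∂μ| ≤
      ∑ i : Fin n, ENNReal.ofReal |∫ ω, Z i ω * F i ω ∂μ| := by
    have hfun : (fun ω => Z (T ω) ω) = fun ω => ∑ i : Fin n, Z i ω * F i ω := by
      ext ω
      simp only [hF_def, mul_ite, mul_one, mul_zero]
      rw [Finset.sum_ite_eq Finset.univ (T ω) (fun i => Z i ω)]
      simp
    have h1 : ∫ ω, Z (T ω) ω ∂μ = ∑ i : Fin n, ∫ ω, Z i ω * F i ω ∂μ := by
      rw [hfun]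
      exact integral_finset_sum _ fun i _ => hint1 i
    rw [h1]
    calc ENNReal.ofReal |∑ i : Fin n, ∫ ω, Z i ω * F i ω ∂μ|
        ≤ ENNReal.ofReal (∑ i : Fin n, |∫ ω, Z i ω * F i ω ∂μ|) :=
          ENNReal.ofReal_le_ofReal (Finset.abs_sum_le_sum_abs _ _)
      _ = ∑ i : Fin n, ENNReal.ofReal |∫ ω, Z i ω * F i ω ∂μ| :=
          ENNReal.ofReal_sum_of_nonneg fun i _ => abs_nonneg _
  -- n ≠ 0
  have hn : n ≠ 0 := by
    rintro rfl
    haveI hem : IsEmpty Ω := ⟨fun ω => Fin.elim0 (T ω)⟩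
    have h1 : (1 : ℝ≥0∞) = 0 := by
      rw [← measure_univ (μ := μ), Set.univ_eq_empty_iff.mpr hem, measure_empty]
    simp at h1
  have hσ0 : ENNReal.ofReal σ ≠ 0 := by
    simp [ENNReal.ofReal_eq_zero, not_le, hσ]
  have hσt : ENNReal.ofReal σ ≠ ∞ := ENNReal.ofReal_ne_top
  constructor
  · -- case 1 < p, finite q
    intro q hp1 hpq
    have hcj : Real.HolderConjugate p q :=
      Real.holderConjugate_iff.mpr ⟨hp1, by simpa [one_div] using hpq⟩
    have hq0 : 0 < q := by
      have h1 : 1 / p < 1 := by rw [div_lt_one (by linarith)]; exact hp1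
      have h2 : 0 < 1 / q := by linarith
      exact one_div_pos.mp h2
    have hp0 : 0 < p := by linarith
    have hQ : (1:ℝ≥0∞) / 1 = 1 / ENNReal.ofReal p + 1 / ENNReal.ofReal q := by
      rw [one_div, one_div, one_div, ← ENNReal.ofReal_inv_of_pos hp0,
        ← ENNReal.ofReal_inv_of_pos hq0, ← ENNReal.ofReal_add (by positivity) (by positivity),
        show p⁻¹ + q⁻¹ = 1 from by simpa [one_div] using hpq]
      simp
    set C : ℝ≥0∞ := ENNReal.ofReal σ * (n : ℝ≥0∞) ^ (1 / p) with hC_def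
    have hC0 : C ≠ 0 := by
      simp only [hC_def, mul_ne_zero_iff]
      refine ⟨hσ0, ?_⟩
      simp [ENNReal.rpow_eq_zero_iff, hn, Nat.pos_of_ne_zero hn, (by positivity : (0:ℝ) < 1/p)]
    have hCt : C ≠ ∞ := by
      simp only [hC_def]
      exact ENNReal.mul_ne_top hσt
        (ENNReal.rpow_ne_top_of_nonneg (by positivity) (ENNReal.natCast_ne_top n))
    set G : Fin n → ℝ → ℝ≥0∞ := fun i a => ∫⁻ ω, ENNReal.ofReal |W i ω - a| ^ q ∂μ with hG_def
    have hNq : ∀ i (a : ℝ),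
        (eLpNorm (fun ω => W i ω - a) (ENNReal.ofReal q) μ) ^ q = G i a := by
      intro i a
      rw [eLpNorm_eq_lintegral_rpow_enorm_toReal (by simp [ENNReal.ofReal_eq_zero, not_le, hq0])
        ENNReal.ofReal_ne_top, ENNReal.toReal_ofReal hq0.le, ← ENNReal.rpow_mul,
        one_div_mul_cancel hq0.ne', ENNReal.rpow_one, hG_def]
      refine lintegral_congr fun ω => ?_
      rw [Real.enorm_eq_ofReal_abs]
    have hmain : ∀ c : Fin n → ℝ,
        ENNReal.ofReal |∫ ω, Z (T ω) ω ∂μ| ≤ C * (∑ i : Fin n, G i (c i)) ^ (1 / q) := by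
      intro c
      refine hdec.trans ?_
      calc ∑ i : Fin n, ENNReal.ofReal |∫ ω, Z i ω * F i ω ∂μ|
          ≤ ∑ i : Fin n, ENNReal.ofReal σ *
              eLpNorm (fun ω => W i ω - c i) (ENNReal.ofReal q) μ :=
            Finset.sum_le_sum fun i _ => key (ENNReal.ofReal q) hQ i (c i)
        _ = ENNReal.ofReal σ * ∑ i : Fin n,
              eLpNorm (fun ω => W i ω - c i) (ENNReal.ofReal q) μ := by
            rw [Finset.mul_sum]
        _ ≤ ENNReal.ofReal σ * (((Finset.univ : Finset (Fin n)).sum (fun _ => (1:ℝ≥0∞) ^ p)) ^ (1 / p) *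
              (∑ i : Fin n, (eLpNorm (fun ω => W i ω - c i) (ENNReal.ofReal q) μ) ^ q)
                ^ (1 / q)) := by
            refine mul_le_mul_right ?_ _
            have h := ENNReal.inner_le_Lp_mul_Lq (Finset.univ : Finset (Fin n))
              (fun _ => (1:ℝ≥0∞))
              (fun i => eLpNorm (fun ω => W i ω - c i) (ENNReal.ofReal q) μ) hcj
            simpa using h
        _ = C * (∑ i : Fin n, G i (c i)) ^ (1 / q) := by
            have h1 : ((Finset.univ : Finset (Fin n)).sum (fun _ => (1:ℝ≥0∞) ^ p)) = (n : ℝ≥0∞) := by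
              simp [ENNReal.one_rpow]
            have h2 : (∑ i : Fin n,
                (eLpNorm (fun ω => W i ω - c i) (ENNReal.ofReal q) μ) ^ q) =
                ∑ i : Fin n, G i (c i) :=
              Finset.sum_congr rfl fun i _ => hNq i (c i)
            rw [hC_def, h1, h2, mul_assoc]
    calc ENNReal.ofReal |∫ ω, Z (T ω) ω ∂μ|
        ≤ ⨅ c : Fin n → ℝ, C * (∑ i : Fin n, G i (c i)) ^ (1 / q) := le_iInf hmain
      _ = C * ⨅ c : Fin n → ℝ, (∑ i : Fin n, G i (c i)) ^ (1 / q) :=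
          (ENNReal.mul_iInf_of_ne hC0 hCt).symm
      _ = C * (⨅ c : Fin n → ℝ, ∑ i : Fin n, G i (c i)) ^ (1 / q) := by
          rw [iInf_rpow_aux _ (by positivity : (0:ℝ) < 1 / q)]
      _ = C * (∑ i : Fin n, ⨅ a : ℝ, G i a) ^ (1 / q) := by
          rw [iInf_comp_sum_aux]
  · -- case p = 1, q = ∞
    intro hp1
    subst hp1
    have hQ : (1:ℝ≥0∞) / 1 = 1 / ENNReal.ofReal 1 + 1 / (∞ : ℝ≥0∞) := by
      simp [ENNReal.ofReal_one]
    have hmain : ∀ c : Fin n → ℝ,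
        ENNReal.ofReal |∫ ω, Z (T ω) ω ∂μ| ≤
          ∑ i : Fin n, ENNReal.ofReal σ * eLpNorm (fun ω => W i ω - c i) ∞ μ := fun c =>
      hdec.trans (Finset.sum_le_sum fun i _ => key ∞ hQ i (c i))
    have h2 : ENNReal.ofReal |∫ ω, Z (T ω) ω ∂μ| ≤
        ⨅ c : Fin n → ℝ, ∑ i : Fin n,
          ENNReal.ofReal σ * eLpNorm (fun ω => W i ω - c i) ∞ μ := le_iInf hmain
    rw [iInf_comp_sum_aux (Finset.univ : Finset (Fin n))
      (fun i a => ENNReal.ofReal σ * eLpNorm (fun ω => W i ω - a) ∞ μ)] at h2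
    refine h2.trans ?_
    calc ∑ i : Fin n, ⨅ a : ℝ, ENNReal.ofReal σ * eLpNorm (fun ω => W i ω - a) ∞ μ
        = ∑ i : Fin n, ENNReal.ofReal σ * ⨅ a : ℝ, eLpNorm (fun ω => W i ω - a) ∞ μ :=
          Finset.sum_congr rfl fun i _ => (ENNReal.mul_iInf_of_ne hσ0 hσt).symm
      _ = ENNReal.ofReal σ * ∑ i : Fin n, ⨅ a : ℝ, eLpNorm (fun ω => W i ω - a) ∞ μ := by
          rw [Finset.mul_sum]
      _ ≤ ENNReal.ofReal σ * ((n : ℝ≥0∞) *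
            ⨆ i : Fin n, ⨅ a : ℝ, eLpNorm (fun ω => W i ω - a) ∞ μ) := by
          refine mul_le_mul_right ?_ _
          calc ∑ i : Fin n, ⨅ a : ℝ, eLpNorm (fun ω => W i ω - a) ∞ μ
              ≤ ∑ _i : Fin n, ⨆ j : Fin n, ⨅ a : ℝ, eLpNorm (fun ω => W j ω - a) ∞ μ :=
                Finset.sum_le_sum fun i _ => le_iSup
                  (fun j => ⨅ a : ℝ, eLpNorm (fun ω => W j ω - a) ∞ μ) i
            _ = (n : ℝ≥0∞) * ⨆ i : Fin n, ⨅ a : ℝ, eLpNorm (fun ω => W i ω - a) ∞ μ := by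
                simp [Finset.sum_const, nsmul_eq_mul]
      _ = ENNReal.ofReal σ * (n : ℝ≥0∞) *
            ⨆ i : Fin n, ⨅ a : ℝ, eLpNorm (fun ω => W i ω - a) ∞ μ := by
          rw [mul_assoc]
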